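/- Let g : [0,∞) → ℝ be a nonnegative C¹ function such that |g'(r)| ≤ C(1 + r) for some constant C > 0 and all r ≥ 0, and such that ∫₀^∞ g(r) r dr < ∞. Then g(r) → 0 as r → ∞. -/

import Mathlib

open MeasureTheory

theorem stmt17 (g : ℝ → ℝ) (hpos : ∀ r ≥ (0 : ℝ), 0 ≤ g r)
    (hC1 : ContDiffOn ℝ 1 g (Set.Ici 0))
    (hderiv : ∃ C > (0 : ℝ), ∀ r ≥ (0 : ℝ), |deriv g r| ≤ C * (1 + r))
    (hint : ∫⁻ r in Set.Ioi (0 : ℝ), ENNReal.ofReal (g r * r) < ⊤) :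
    Filter.Tendsto g Filter.atTop (nhds 0) := by
  obtain ⟨C, hCpos, hC⟩ := hderiv
  have hdiff : ∀ x : ℝ, 0 < x → DifferentiableAt ℝ g x := fun x hx =>
    ((hC1.differentiableOn one_ne_zero) x hx.le).differentiableAt (Ici_mem_nhds hx)
  by_contra hcon
  rw [Metric.tendsto_atTop] at hcon
  push_neg at hcon
  obtain ⟨ε, hε, hfreq⟩ := hcon
  set c : ℝ := ε / 2 * min 2 (ε / (4 * C)) with hc_def
  have hc : 0 < c := mul_pos (by positivity) (lt_min two_pos (by positivity))
  set μ : Measure ℝ :=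
    (volume.restrict (Set.Ioi (0 : ℝ))).withDensity (fun r => ENNReal.ofReal (g r * r)) with hμdef
  have hμ : ∀ n : ℕ, μ (Set.Ioi (n : ℝ)) =
      ∫⁻ r in Set.Ioi (n : ℝ), ENNReal.ofReal (g r * r) := by
    intro n
    rw [hμdef, withDensity_apply _ measurableSet_Ioi,
      Measure.restrict_restrict measurableSet_Ioi, Set.Ioi_inter_Ioi,
      sup_of_le_left (by exact_mod_cast n.cast_nonneg)]
  -- key lower bound on each tail
  have hkey : ∀ n : ℕ, ENNReal.ofReal c ≤ μ (Set.Ioi (n : ℝ)) := by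
    intro n
    obtain ⟨r, hrn, hrg⟩ := hfreq ((n : ℝ) + 2)
    have hr2 : (2 : ℝ) ≤ r := le_trans (by linarith [(Nat.cast_nonneg n : (0:ℝ) ≤ n)]) hrn
    have hr0 : (0 : ℝ) < r := by linarith
    have hgr : ε ≤ g r := by
      have := hpos r hr0.le
      rwa [Real.dist_eq, sub_zero, abs_of_nonneg this] at hrg
    set M : ℝ := C * (2 + r) with hM_def
    have hM : 0 < M := by positivity
    set δ : ℝ := min 1 (ε / (2 * M)) with hδ_def
    have hδ : 0 < δ := lt_min one_pos (by positivity)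
    have hδ1 : δ ≤ 1 := min_le_left _ _
    -- derivative bound on the interval
    have hbound : ∀ x ∈ Set.Ico r (r + δ), ‖deriv g x‖ ≤ M := by
      intro x hx
      have hx1 : r ≤ x := hx.1
      have hx2 : x < r + δ := hx.2
      have := hC x (by linarith)
      rw [Real.norm_eq_abs]
      calc |deriv g x| ≤ C * (1 + x) := this
        _ ≤ M := by rw [hM_def]; nlinarith
    have hmvt : ∀ x ∈ Set.Icc r (r + δ), ‖g x - g r‖ ≤ M * (x - r) := by
      refine norm_image_sub_le_of_norm_deriv_le_segment' (f' := deriv g) ?_ hbound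
      intro x hx
      exact ((hdiff x (by linarith [hx.1])).hasDerivAt).hasDerivWithinAt
    have hlow : ∀ x ∈ Set.Icc r (r + δ), ε / 2 ≤ g x := by
      intro x hx
      have h1 := hmvt x hx
      rw [Real.norm_eq_abs] at h1
      have h2 : |g x - g r| ≤ M * δ := by
        refine h1.trans ?_
        have : x - r ≤ δ := by linarith [hx.2]
        nlinarith
      have hMδ : M * δ ≤ ε / 2 := by
        have : δ ≤ ε / (2 * M) := min_le_right _ _
        calc M * δ ≤ M * (ε / (2 * M)) := by nlinarith
          _ = ε / 2 := by field_simp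
      have := abs_le.1 h2
      linarith [this.1]
    -- integral lower bound
    have hsub : Set.Ioc r (r + δ) ⊆ Set.Ioi (n : ℝ) := by
      intro x hx
      have : (n : ℝ) < r := by linarith
      exact lt_trans this hx.1
    calc ENNReal.ofReal c ≤ ENNReal.ofReal (ε / 2 * r * δ) := by
          apply ENNReal.ofReal_le_ofReal
          rw [hc_def]
          have h1 : min 2 (ε / (4 * C)) ≤ r * δ := by
            rcases le_or_gt (ε / (2 * M)) 1 with h | h
            · have hδ2 : δ = ε / (2 * M) := min_eq_right h
              have : ε / (4 * C) ≤ r * δ := by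
                rw [hδ2, hM_def]
                have heq : r * (ε / (2 * (C * (2 + r)))) = (r * ε) / (2 * (C * (2 + r))) := by
                  ring
                rw [heq, div_le_div_iff₀ (by positivity) (by positivity)]
                nlinarith [mul_pos hCpos hε, mul_nonneg (mul_pos hCpos hε).le (sub_nonneg.2 hr2)]
              exact le_trans (min_le_right _ _) this
            · have hδ2 : δ = 1 := min_eq_left h.le
              rw [hδ2, mul_one]
              exact le_trans (min_le_left _ _) hr2
          nlinarith
      _ = ENNReal.ofReal (ε / 2 * r) * ENNReal.ofReal δ := by
          rw [← ENNReal.ofReal_mul (by positivity)]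
      _ = ENNReal.ofReal (ε / 2 * r) * volume (Set.Ioc r (r + δ)) := by
          rw [Real.volume_Ioc]; congr 1; congr 1; ring
      _ = ∫⁻ _ in Set.Ioc r (r + δ), ENNReal.ofReal (ε / 2 * r) := by
          rw [setLIntegral_const]
      _ ≤ ∫⁻ x in Set.Ioc r (r + δ), ENNReal.ofReal (g x * x) := by
          apply setLIntegral_mono' measurableSet_Ioc
          intro x hx
          apply ENNReal.ofReal_le_ofReal
          have h1 : ε / 2 ≤ g x := hlow x ⟨hx.1.le, hx.2⟩
          have h2 : r ≤ x := hx.1.le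
          nlinarith
      _ ≤ ∫⁻ x in Set.Ioi (n : ℝ), ENNReal.ofReal (g x * x) :=
          lintegral_mono_set hsub
      _ = μ (Set.Ioi (n : ℝ)) := (hμ n).symm
  -- tail tends to zero
  have hfin : μ (Set.Ioi ((0 : ℕ) : ℝ)) ≠ ⊤ := by
    rw [hμ 0]
    simp only [Nat.cast_zero]
    exact hint.ne
  have hanti : Antitone (fun n : ℕ => Set.Ioi (n : ℝ)) := fun m n h =>
    Set.Ioi_subset_Ioi (by exact_mod_cast h)
  have hinter : (⋂ n : ℕ, Set.Ioi (n : ℝ)) = ∅ := by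
    ext x
    simp only [Set.mem_iInter, Set.mem_Ioi, Set.mem_empty_iff_false, iff_false, not_forall,
      not_lt]
    obtain ⟨n, hn⟩ := exists_nat_gt x
    exact ⟨n, hn.le⟩
  have htend := tendsto_measure_iInter_atTop
    (μ := μ) (s := fun n : ℕ => Set.Ioi (n : ℝ))
    (fun n => measurableSet_Ioi.nullMeasurableSet) hanti ⟨0, hfin⟩
  rw [hinter, measure_empty] at htend
  have : ENNReal.ofReal c ≤ 0 := ge_of_tendsto' htend hkey
  exact absurd this (not_le.mpr (ENNReal.ofReal_pos.mpr hc))
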